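/- arXiv:2010.00438 — 2 statements merged into one kernel-verified Lean document; each statement's English description precedes it below -/
import Mathlib

section
/- Let f : ℝ^d → ℝ be a C² probability density with 0 < f ≤ 1, satisfying ‖∇f(u)‖ ≤ C_b f(u)(1 + ln(1/f(u))) and ‖∇²f(u)‖_op ≤ C_c f(u)(1 + ln(1/f(u))) for all u. Then for any x and any r < 1/(2C_b(1 - ln f(x))), |P(B(x,r)) − f(x)·V(B(x,r))| ≤ C_c r² V(B(x,r)) f(x)(1 + ln(1/f(x))), where P(B(x,r)) = ∫_{B(x,r)} f and V denotes Lebesgue volume. -/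
open MeasureTheory Metric

lemma psi_dec {a t : ℝ} (ha : 1 ≤ a) (hat : a ≤ t) :
    Real.exp (1 - t) * t ≤ Real.exp (1 - a) * a := by
  have h1 : t ≤ a * Real.exp (t - a) := by
    nlinarith [Real.add_one_le_exp (t - a)]
  have h2 : Real.exp (1 - t) * (a * Real.exp (t - a)) = Real.exp (1 - a) * a := by
    rw [mul_comm a (Real.exp (t-a)), ← mul_assoc, ← Real.exp_add]; ring_nf
  nlinarith [Real.exp_pos (1 - t)]

lemma exp_half_le_two : Real.exp (1/2 : ℝ) ≤ 2 := by
  have h : Real.exp (1/2 : ℝ) * Real.exp (1/2 : ℝ) = Real.exp 1 := by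
    rw [← Real.exp_add]; norm_num
  nlinarith [Real.exp_one_lt_d9, Real.exp_pos (1/2 : ℝ)]

lemma exp_half_le : Real.exp (1/2 : ℝ) ≤ 1.65 := by
  have h : Real.exp (1/2 : ℝ) * Real.exp (1/2 : ℝ) = Real.exp 1 := by
    rw [← Real.exp_add]; norm_num
  nlinarith [Real.exp_one_lt_d9, Real.exp_pos (1/2 : ℝ)]

lemma psi_bound {s c t : ℝ} (hs : 1 ≤ s) (hc : 0 ≤ c) (hcs : c * s ≤ 1/2)
    (ht1 : 1 ≤ t) (htl : s * Real.exp (-c) ≤ t) :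
    Real.exp (1 - t) * t ≤ 2 * (Real.exp (1 - s) * s) := by
  have hsp : 0 < s := lt_of_lt_of_le one_pos hs
  rcases le_or_gt 1 (s * Real.exp (-c)) with hA | hB
  · have h1 : Real.exp (1 - t) * t ≤ Real.exp (1 - s * Real.exp (-c)) * (s * Real.exp (-c)) :=
      psi_dec hA htl
    have key0 : Real.exp (1 - s) * Real.exp (s - s * Real.exp (-c) - c)
        = Real.exp (1 - s * Real.exp (-c)) * Real.exp (-c) := by
      rw [← Real.exp_add, ← Real.exp_add]; congr 1; ring
    have key : Real.exp (1 - s * Real.exp (-c)) * (s * Real.exp (-c))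
        = Real.exp (1 - s) * s * Real.exp (s - s * Real.exp (-c) - c) := by
      linear_combination (-s) * key0
    have hexp : s - s * Real.exp (-c) - c ≤ 1/2 := by
      nlinarith [Real.add_one_le_exp (-c)]
    have h2 : Real.exp (s - s * Real.exp (-c) - c) ≤ 2 :=
      le_trans (Real.exp_le_exp.mpr hexp) exp_half_le_two
    have h3 : 0 < Real.exp (1 - s) * s := by positivity
    nlinarith
  · have h1 : Real.exp (1 - t) * t ≤ Real.exp (1 - 1) * 1 := psi_dec le_rfl ht1
    have hc2 : c ≤ 1/2 := by nlinarith
    have hsle : s ≤ 1.65 := by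
      have h4 : Real.exp (-(1/2:ℝ)) ≤ Real.exp (-c) := Real.exp_le_exp.mpr (by linarith)
      have h5 : s * Real.exp (-(1/2:ℝ)) < 1 := by nlinarith [Real.exp_pos (-(1/2:ℝ))]
      have h6 : Real.exp (-(1/2:ℝ)) = (Real.exp (1/2:ℝ))⁻¹ := by
        rw [← Real.exp_neg]
      have h7 : s < Real.exp (1/2:ℝ) := by
        rw [h6] at h5
        have := Real.exp_pos (1/2:ℝ)
        calc s = s * (Real.exp (1/2:ℝ))⁻¹ * Real.exp (1/2:ℝ) := by field_simp
          _ < 1 * Real.exp (1/2:ℝ) := by nlinarith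
          _ = _ := one_mul _
      linarith [exp_half_le]
    have h8 : 2 - s ≤ Real.exp (1 - s) := by nlinarith [Real.add_one_le_exp (1 - s)]
    have h9 : (1:ℝ) ≤ 2 * (Real.exp (1 - s) * s) := by nlinarith
    simp at h1
    linarith

set_option maxHeartbeats 1000000 in
/-- For a `C²` probability density `f` with `0 < f ≤ 1`, whose gradient and
Hessian decay with the density, and any `r < 1/(2C_b(1 - ln f(x)))`:
`|P(B(x,r)) − f(x)·V(B(x,r))| ≤ C_c r² V(B(x,r)) f(x)(1 + ln(1/f(x)))`. -/
theorem stmt10 {d : ℕ} (f : EuclideanSpace ℝ (Fin d) → ℝ) (Cb Cc : ℝ)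
    (hCb : 0 < Cb) (hCc : 0 < Cc)
    (hf : ContDiff ℝ 2 f) (hpos : ∀ u, 0 < f u) (hle : ∀ u, f u ≤ 1)
    (hint : ∫ u, f u = 1)
    (hgrad : ∀ u, ‖gradient f u‖ ≤ Cb * f u * (1 + Real.log (1 / f u)))
    (hhess : ∀ u, ‖fderiv ℝ (fderiv ℝ f) u‖ ≤ Cc * f u * (1 + Real.log (1 / f u)))
    (x : EuclideanSpace ℝ (Fin d)) (r : ℝ) (hr : 0 ≤ r)
    (hrlt : r < 1 / (2 * Cb * (1 - Real.log (f x)))) :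
    |(∫ u in closedBall x r, f u) - f x * (volume (closedBall x r)).toReal| ≤
      Cc * r ^ 2 * (volume (closedBall x r)).toReal * f x *
        (1 + Real.log (1 / f x)) := by
  classical
  -- basic facts
  have hlog : ∀ u : EuclideanSpace ℝ (Fin d), 1 + Real.log (1 / f u) = 1 - Real.log (f u) := by
    intro u; rw [one_div, Real.log_inv]; ring
  have hy : ∀ u : EuclideanSpace ℝ (Fin d), 0 < 1 - Real.log (f u) := by
    intro u
    have := Real.log_nonpos (hpos u).le (hle u)
    linarith
  have hy1 : ∀ u : EuclideanSpace ℝ (Fin d), 1 ≤ 1 - Real.log (f u) := by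
    intro u
    have := Real.log_nonpos (hpos u).le (hle u)
    linarith
  set s := 1 - Real.log (f x) with hsdef
  have hs1 : 1 ≤ s := hy1 x
  have hsp : 0 < s := hy x
  have hcs : Cb * r * s ≤ 1/2 := by
    have hA : 0 < 2 * Cb * s := by positivity
    rw [lt_div_iff₀ hA] at hrlt
    nlinarith
  have hgrad' : ∀ u : EuclideanSpace ℝ (Fin d), ‖fderiv ℝ f u‖ ≤ Cb * (f u * (1 - Real.log (f u))) := by
    intro u
    have h := hgrad u
    rw [hlog u] at h
    have hn : ‖gradient f u‖ = ‖fderiv ℝ f u‖ := by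
      rw [gradient]; exact LinearIsometryEquiv.norm_map _ _
    rw [hn] at h
    calc ‖fderiv ℝ f u‖ ≤ Cb * f u * (1 - Real.log (f u)) := h
      _ = Cb * (f u * (1 - Real.log (f u))) := by ring
  have hhess' : ∀ u : EuclideanSpace ℝ (Fin d), ‖fderiv ℝ (fderiv ℝ f) u‖ ≤ Cc * (f u * (1 - Real.log (f u))) := by
    intro u
    have h := hhess u
    rw [hlog u] at h
    calc ‖fderiv ℝ (fderiv ℝ f) u‖ ≤ Cc * f u * (1 - Real.log (f u)) := h
      _ = Cc * (f u * (1 - Real.log (f u))) := by ring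
  have hdiff : Differentiable ℝ f := hf.differentiable two_ne_zero
  have hDf : ∀ u : EuclideanSpace ℝ (Fin d), HasFDerivAt f (fderiv ℝ f u) u := fun u => (hdiff u).hasFDerivAt
  have hf1 : ContDiff ℝ 1 (fderiv ℝ f) := hf.fderiv_right (le_refl _)
  have hD2 : ∀ u : EuclideanSpace ℝ (Fin d), HasFDerivAt (fderiv ℝ f) (fderiv ℝ (fderiv ℝ f) u) u :=
    fun u => (hf1.differentiable one_ne_zero u).hasFDerivAt
  -- the log-log function
  set φ : EuclideanSpace ℝ (Fin d) → ℝ := fun u => Real.log (1 - Real.log (f u)) with hφdef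
  have hφderiv : ∀ u : EuclideanSpace ℝ (Fin d),
      HasFDerivAt φ ((-(f u * (1 - Real.log (f u)))⁻¹) • fderiv ℝ f u) u := by
    intro u
    have h1 : HasFDerivAt (fun v => Real.log (f v)) ((f u)⁻¹ • fderiv ℝ f u) u :=
      (Real.hasDerivAt_log (hpos u).ne').comp_hasFDerivAt u (hDf u)
    have h2 : HasFDerivAt (fun v => 1 - Real.log (f v)) (-((f u)⁻¹ • fderiv ℝ f u)) u :=
      h1.const_sub 1
    have h3 := (Real.hasDerivAt_log (hy u).ne').comp_hasFDerivAt u h2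
    refine h3.congr_fderiv ?_
    rw [smul_neg, smul_smul, ← neg_smul]
    congr 1
    rw [mul_inv]
    ring
  have hφbound : ∀ u : EuclideanSpace ℝ (Fin d), ‖(-(f u * (1 - Real.log (f u)))⁻¹) • fderiv ℝ f u‖ ≤ Cb := by
    intro u
    have hfy : (0:ℝ) < f u * (1 - Real.log (f u)) := mul_pos (hpos u) (hy u)
    rw [norm_smul, Real.norm_eq_abs, abs_neg, abs_inv, abs_of_pos hfy]
    rw [inv_mul_le_iff₀ hfy]
    calc ‖fderiv ℝ f u‖ ≤ Cb * (f u * (1 - Real.log (f u))) := hgrad' u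
      _ = f u * (1 - Real.log (f u)) * Cb := by ring
  have hlip : ∀ u ∈ closedBall x r, |φ u - φ x| ≤ Cb * r := by
    intro u hu
    have h := (convex_closedBall x r).norm_image_sub_le_of_norm_hasFDerivWithin_le
      (fun v _ => (hφderiv v).hasFDerivWithinAt) (fun v _ => hφbound v)
      (mem_closedBall_self hr) hu
    calc |φ u - φ x| = ‖φ u - φ x‖ := (Real.norm_eq_abs _).symm
      _ ≤ Cb * ‖u - x‖ := h
      _ ≤ Cb * r := by
          have : ‖u - x‖ ≤ r := by
            rw [← dist_eq_norm]; exact mem_closedBall.mp hu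
          nlinarith
  -- key supremum bound
  have key : ∀ u ∈ closedBall x r,
      f u * (1 - Real.log (f u)) ≤ 2 * (f x * s) := by
    intro u hu
    have hl := hlip u hu
    have htl : s * Real.exp (-(Cb * r)) ≤ 1 - Real.log (f u) := by
      have h1 : φ x - Cb * r ≤ φ u := by
        have := abs_le.mp hl
        linarith [this.1]
      have h2 : Real.exp (φ x - Cb * r) ≤ Real.exp (φ u) := Real.exp_le_exp.mpr h1
      rw [Real.exp_sub, Real.exp_log (hy x), Real.exp_log (hy u)] at h2
      calc s * Real.exp (-(Cb * r)) = s / Real.exp (Cb * r) := by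
            rw [Real.exp_neg]; ring
        _ ≤ _ := h2
    have hpsi := psi_bound hs1 (by positivity : (0:ℝ) ≤ Cb * r) hcs (hy1 u) htl
    have hfu : Real.exp (1 - (1 - Real.log (f u))) = f u := by
      rw [show (1 : ℝ) - (1 - Real.log (f u)) = Real.log (f u) by ring,
        Real.exp_log (hpos u)]
    have hfx : Real.exp (1 - s) = f x := by
      rw [hsdef, show (1 : ℝ) - (1 - Real.log (f x)) = Real.log (f x) by ring,
        Real.exp_log (hpos x)]
    rw [hfu, hfx] at hpsi
    linarith [hpsi]
  -- Hessian bound on the ball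
  set K := Cc * (2 * (f x * s)) with hKdef
  have hessbound : ∀ u ∈ closedBall x r, ‖fderiv ℝ (fderiv ℝ f) u‖ ≤ K := by
    intro u hu
    calc ‖fderiv ℝ (fderiv ℝ f) u‖ ≤ Cc * (f u * (1 - Real.log (f u))) := hhess' u
      _ ≤ Cc * (2 * (f x * s)) := by
          have := key u hu
          nlinarith
  have Dlip : ∀ u ∈ closedBall x r, ‖fderiv ℝ f u - fderiv ℝ f x‖ ≤ K * ‖u - x‖ :=
    fun u hu => (convex_closedBall x r).norm_image_sub_le_of_norm_hasFDerivWithin_le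
      (fun v hv => (hD2 v).hasFDerivWithinAt) (fun v hv => hessbound v hv)
      (mem_closedBall_self hr) hu
  have hK0 : 0 ≤ K :=
    le_of_lt (mul_pos hCc (mul_pos two_pos (mul_pos (hpos x) hsp)))
  -- Taylor estimate
  have taylor : ∀ u ∈ closedBall x r,
      |f u - f x - (fderiv ℝ f x) (u - x)| ≤ K / 2 * r ^ 2 := by
    intro u hu
    set v := u - x with hvdef
    have hv : ‖v‖ ≤ r := by rw [← dist_eq_norm]; exact mem_closedBall.mp hu
    have hcurve : ∀ τ : ℝ, τ ∈ Set.Icc (0:ℝ) 1 → x + τ • v ∈ closedBall x r := by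
      intro τ hτ
      rw [mem_closedBall, dist_eq_norm, add_sub_cancel_left, norm_smul,
        Real.norm_eq_abs, abs_of_nonneg hτ.1]
      nlinarith [hτ.2, norm_nonneg v]
    set g : ℝ → ℝ := fun τ => f (x + τ • v) - τ * ((fderiv ℝ f x) v) - f x with hgdef
    have hg' : ∀ τ : ℝ, HasDerivAt g
        ((fderiv ℝ f (x + τ • v)) v - (fderiv ℝ f x) v) τ := by
      intro τ
      have hc : HasDerivAt (fun τ : ℝ => x + τ • v) v τ := by
        simpa using ((hasDerivAt_id τ).smul_const v).const_add x
      have h1 : HasDerivAt (fun τ : ℝ => f (x + τ • v)) ((fderiv ℝ f (x + τ • v)) v) τ :=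
        (hDf (x + τ • v)).comp_hasDerivAt τ hc
      have h2 : HasDerivAt (fun τ : ℝ => τ * ((fderiv ℝ f x) v)) ((fderiv ℝ f x) v) τ :=
        hasDerivAt_mul_const _
      simpa [hgdef] using (h1.sub h2).sub_const (f x)
    have hbound : ∀ τ ∈ Set.Ico (0:ℝ) 1,
        ‖(fderiv ℝ f (x + τ • v)) v - (fderiv ℝ f x) v‖ ≤ K * ‖v‖ ^ 2 * τ := by
      intro τ hτ
      have hmem := hcurve τ ⟨hτ.1, hτ.2.le⟩
      have h1 : ‖fderiv ℝ f (x + τ • v) - fderiv ℝ f x‖ ≤ K * ‖τ • v‖ :=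
        by simpa using Dlip (x + τ • v) hmem
      have h2 : ‖(fderiv ℝ f (x + τ • v)) v - (fderiv ℝ f x) v‖
          ≤ ‖fderiv ℝ f (x + τ • v) - fderiv ℝ f x‖ * ‖v‖ := by
        rw [← ContinuousLinearMap.sub_apply]
        exact (fderiv ℝ f (x + τ • v) - fderiv ℝ f x).le_opNorm v
      have h3 : ‖τ • v‖ = τ * ‖v‖ := by
        rw [norm_smul, Real.norm_eq_abs, abs_of_nonneg hτ.1]
      calc ‖(fderiv ℝ f (x + τ • v)) v - (fderiv ℝ f x) v‖
          ≤ ‖fderiv ℝ f (x + τ • v) - fderiv ℝ f x‖ * ‖v‖ := h2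
        _ ≤ K * (τ * ‖v‖) * ‖v‖ := by rw [← h3]; nlinarith [norm_nonneg v]
        _ = K * ‖v‖ ^ 2 * τ := by ring
    have hB : ∀ τ : ℝ, HasDerivAt (fun τ : ℝ => K * ‖v‖ ^ 2 / 2 * τ ^ 2)
        (K * ‖v‖ ^ 2 * τ) τ := by
      intro τ
      have := (hasDerivAt_pow 2 τ).const_mul (K * ‖v‖ ^ 2 / 2)
      refine this.congr_deriv ?_
      ring
    have hmain := image_norm_le_of_norm_deriv_right_le_deriv_boundary
      (f := g) (f' := fun τ => (fderiv ℝ f (x + τ • v)) v - (fderiv ℝ f x) v)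
      (a := 0) (b := 1)
      (fun τ _ => (hg' τ).continuousAt.continuousWithinAt)
      (fun τ hτ => (hg' τ).hasDerivWithinAt)
      (by simp [hgdef])
      hB hbound
    have h1 := hmain (Set.right_mem_Icc.mpr zero_le_one)
    have hxv : x + (1:ℝ) • v = u := by rw [one_smul, hvdef]; abel
    have hg1 : g 1 = f u - f x - (fderiv ℝ f x) (u - x) := by
      simp only [hgdef]
      rw [hxv, hvdef]; ring
    rw [hg1] at h1
    calc |f u - f x - (fderiv ℝ f x) (u - x)|
        = ‖f u - f x - (fderiv ℝ f x) (u - x)‖ := (Real.norm_eq_abs _).symm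
      _ ≤ K * ‖v‖ ^ 2 / 2 * 1 ^ 2 := h1
      _ ≤ K / 2 * r ^ 2 := by
          have h2 : ‖v‖ ^ 2 ≤ r ^ 2 := pow_le_pow_left₀ (norm_nonneg v) hv 2
          nlinarith
  -- Integration
  have hVfin : volume (closedBall x r) < ⊤ := measure_closedBall_lt_top
  have hcont : Continuous f := hf.continuous
  have hIntf : IntegrableOn f (closedBall x r) volume :=
    hcont.continuousOn.integrableOn_compact (isCompact_closedBall x r)
  have hIntc : IntegrableOn (fun _ => f x) (closedBall x r) volume :=
    integrableOn_const hVfin.ne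
  have hIntlin : IntegrableOn (fun u => (fderiv ℝ f x) (u - x)) (closedBall x r) volume :=
    (((fderiv ℝ f x).continuous.comp
      (continuous_id.sub continuous_const)).continuousOn).integrableOn_compact
      (isCompact_closedBall x r)
  have hIntvec : IntegrableOn (fun u : EuclideanSpace ℝ (Fin d) => u - x)
      (closedBall x r) volume :=
    ((continuous_id.sub continuous_const).continuousOn).integrableOn_compact
      (isCompact_closedBall x r)
  have hzero : (∫ u in closedBall x r, (fderiv ℝ f x) (u - x)) = 0 := by
    have hveczero : (∫ u in closedBall x r, (u - x)) = (0 : EuclideanSpace ℝ (Fin d)) := by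
      have h1 : (∫ u in closedBall x r, (u - x))
          = ∫ u, Set.indicator (closedBall (0 : EuclideanSpace ℝ (Fin d)) r) id (u - x) := by
        rw [← integral_indicator measurableSet_closedBall]
        congr 1
        funext u
        by_cases hu : u ∈ closedBall x r
        · have hu' : u - x ∈ closedBall (0 : EuclideanSpace ℝ (Fin d)) r := by
            rw [mem_closedBall_zero_iff]
            rw [mem_closedBall, dist_eq_norm] at hu; exact hu
          rw [Set.indicator_of_mem hu, Set.indicator_of_mem hu']; rfl
        · have hu' : u - x ∉ closedBall (0 : EuclideanSpace ℝ (Fin d)) r := by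
            rw [mem_closedBall_zero_iff]
            rw [mem_closedBall, dist_eq_norm] at hu; exact hu
          rw [Set.indicator_of_notMem hu, Set.indicator_of_notMem hu']
      rw [h1, integral_sub_right_eq_self]
      have hodd : ∀ w : EuclideanSpace ℝ (Fin d),
          Set.indicator (closedBall (0 : EuclideanSpace ℝ (Fin d)) r) id (-w)
            = - Set.indicator (closedBall (0 : EuclideanSpace ℝ (Fin d)) r) id w := by
        intro w
        by_cases hw : w ∈ closedBall (0 : EuclideanSpace ℝ (Fin d)) r
        · have hw' : -w ∈ closedBall (0 : EuclideanSpace ℝ (Fin d)) r := by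
            rw [mem_closedBall_zero_iff, norm_neg]
            exact mem_closedBall_zero_iff.mp hw
          rw [Set.indicator_of_mem hw', Set.indicator_of_mem hw]; rfl
        · have hw' : -w ∉ closedBall (0 : EuclideanSpace ℝ (Fin d)) r := by
            rw [mem_closedBall_zero_iff, norm_neg]
            exact fun h => hw (mem_closedBall_zero_iff.mpr h)
          rw [Set.indicator_of_notMem hw', Set.indicator_of_notMem hw, neg_zero]
      have hneg := integral_neg_eq_self
        (Set.indicator (closedBall (0 : EuclideanSpace ℝ (Fin d)) r) id)
        (volume : Measure (EuclideanSpace ℝ (Fin d)))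
      simp_rw [hodd, integral_neg] at hneg
      have h2 : (2:ℝ) • (∫ w, Set.indicator (closedBall (0 : EuclideanSpace ℝ (Fin d)) r) id w)
          = 0 := by
        rw [two_smul]
        nth_rewrite 1 [← hneg]
        abel
      rcases smul_eq_zero.mp h2 with h | h
      · norm_num at h
      · exact h
    calc (∫ u in closedBall x r, (fderiv ℝ f x) (u - x))
        = (fderiv ℝ f x) (∫ u in closedBall x r, (u - x)) :=
          ContinuousLinearMap.integral_comp_comm _ hIntvec
      _ = 0 := by rw [hveczero]; exact map_zero _
  have hsplit : (∫ u in closedBall x r, f u) - f x * (volume (closedBall x r)).toReal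
      = ∫ u in closedBall x r, (f u - f x - (fderiv ℝ f x) (u - x)) := by
    have e1 : (∫ u in closedBall x r, (f u - f x - (fderiv ℝ f x) (u - x)))
        = (∫ u in closedBall x r, (f u - f x))
          - ∫ u in closedBall x r, (fderiv ℝ f x) (u - x) :=
      integral_sub (hIntf.sub hIntc) hIntlin
    have e2 : (∫ u in closedBall x r, (f u - f x))
        = (∫ u in closedBall x r, f u) - ∫ u in closedBall x r, (f x : ℝ) :=
      integral_sub hIntf hIntc
    have e3 : (∫ _u in closedBall x r, (f x : ℝ))
        = (volume (closedBall x r)).toReal * f x := by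
      rw [setIntegral_const, smul_eq_mul, measureReal_def]
    rw [e1, e2, e3, hzero]
    ring
  rw [hsplit]
  have habs := norm_setIntegral_le_of_norm_le_const hVfin
    (C := K / 2 * r ^ 2)
    (fun u hu => by rw [Real.norm_eq_abs]; exact taylor u hu)
  rw [Real.norm_eq_abs, measureReal_def] at habs
  refine le_trans habs ?_
  rw [hlog x, ← hsdef, hKdef]
  apply le_of_eq
  ring
end

section
/- The ODE initial value problem g(0) = f₀, g'(r) = C·g(r)·(1 − ln g(r)) with 0 < f₀ ≤ 1 and C > 0 has the solution g(r) = e^{1 − e^{-Cr}} · f₀^{e^{-Cr}} for r ≥ 0, and any C¹ function h with h(0) ≤ f₀ and h'(r) ≤ C·h(r)(1 − ln h(r)), 0 < h ≤ e, satisfies h(r) ≤ g(r) for all r ≥ 0. -/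
/-- The IVP `g(0) = f₀`, `g' = C g (1 − ln g)` (with `0 < f₀ ≤ 1`, `C > 0`) is
solved by `g(r) = e^{1 − e^{-Cr}} f₀^{e^{-Cr}}` on `r ≥ 0`, and any `C¹`
function `h` with `h(0) ≤ f₀`, `0 < h ≤ e` and `h' ≤ C h (1 − ln h)`
satisfies `h ≤ g` on `r ≥ 0`. -/
theorem stmt12 (C f₀ : ℝ) (hC : 0 < C) (hf₀ : 0 < f₀) (hf₀' : f₀ ≤ 1)
    (g : ℝ → ℝ)
    (hg : g = fun r => Real.exp (1 - Real.exp (-C * r)) * f₀ ^ Real.exp (-C * r)) :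
    g 0 = f₀ ∧
    (∀ r : ℝ, 0 ≤ r → HasDerivAt g (C * g r * (1 - Real.log (g r))) r) ∧
    (∀ h h' : ℝ → ℝ, (∀ r, HasDerivAt h (h' r) r) → h 0 ≤ f₀ →
      (∀ r, 0 < h r ∧ h r ≤ Real.exp 1) →
      (∀ r, h' r ≤ C * h r * (1 - Real.log (h r))) →
      ∀ r : ℝ, 0 ≤ r → h r ≤ g r) := by
  have hlf : Real.log f₀ ≤ 0 := Real.log_nonpos hf₀.le hf₀'
  set a : ℝ := 1 - Real.log f₀ with ha_def
  have ha : (0:ℝ) ≤ a := by simp [ha_def]; linarith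
  have hgeq : ∀ r, g r = Real.exp (1 - Real.exp (-C * r) * a) := by
    intro r
    rw [hg]
    simp only
    rw [Real.rpow_def_of_pos hf₀, ← Real.exp_add]
    ring_nf
    rw [ha_def]; ring_nf
  have hglog : ∀ r, Real.log (g r) = 1 - Real.exp (-C * r) * a := by
    intro r; rw [hgeq, Real.log_exp]
  refine ⟨?_, ?_, ?_⟩
  · rw [hg]; simp
  · intro r _
    have hE : HasDerivAt (fun s : ℝ => Real.exp (-C * s)) (Real.exp (-C * r) * (-C)) r := by
      simpa using ((hasDerivAt_id r).const_mul (-C)).exp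
    have h1 : HasDerivAt (fun s : ℝ => 1 - Real.exp (-C * s) * a)
        (-(Real.exp (-C * r) * (-C) * a)) r := (hE.mul_const a).const_sub 1
    have h2 := h1.exp
    have hfun : (fun s : ℝ => Real.exp (1 - Real.exp (-C * s) * a)) = g :=
      (funext hgeq).symm
    rw [hfun] at h2
    convert h2 using 1
    rw [hglog r, hgeq r]
    ring
  · intro h h' hh hh0 hpos hineq r hr
    set ψ : ℝ → ℝ := fun s => Real.exp (C * s) * (1 - Real.log (h s)) with hψ
    have hψd : ∀ s, HasDerivAt ψ
        (Real.exp (C * s) * (C * (1 - Real.log (h s)) - h' s / h s)) s := by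
      intro s
      have hE : HasDerivAt (fun t : ℝ => Real.exp (C * t)) (Real.exp (C * s) * C) s := by
        simpa using ((hasDerivAt_id s).const_mul C).exp
      have hl : HasDerivAt (fun t => Real.log (h t)) (h' s / h s) s :=
        (hh s).log (hpos s).1.ne'
      have h2 : HasDerivAt (fun t => 1 - Real.log (h t)) (-(h' s / h s)) s :=
        hl.const_sub 1
      have : HasDerivAt (fun t => Real.exp (C * t) * (1 - Real.log (h t)))
          (Real.exp (C * s) * C * (1 - Real.log (h s)) + Real.exp (C * s) * -(h' s / h s)) s :=
        hE.mul h2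
      convert this using 1
      ring
    have hmono : Monotone ψ := by
      have hdiff : Differentiable ℝ ψ := fun s => (hψd s).differentiableAt
      apply monotone_of_deriv_nonneg hdiff
      intro s
      rw [(hψd s).deriv]
      have h1 : h' s / h s ≤ C * (1 - Real.log (h s)) := by
        rw [div_le_iff₀ (hpos s).1]
        calc h' s ≤ C * h s * (1 - Real.log (h s)) := hineq s
          _ = C * (1 - Real.log (h s)) * h s := by ring
      exact mul_nonneg (Real.exp_pos _).le (sub_nonneg.mpr h1)
    have hψ0 : a ≤ ψ 0 := by
      have hlog0 : Real.log (h 0) ≤ Real.log f₀ :=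
        Real.log_le_log (hpos 0).1 hh0
      simp only [hψ, mul_zero, Real.exp_zero, one_mul]
      simp [ha_def]; linarith
    have key : a ≤ Real.exp (C * r) * (1 - Real.log (h r)) :=
      le_trans hψ0 (hmono hr)
    have hEr : Real.exp (-C * r) * Real.exp (C * r) = 1 := by
      rw [← Real.exp_add]; ring_nf; exact Real.exp_zero
    have hstep : Real.exp (-C * r) * a ≤ 1 - Real.log (h r) := by
      have := mul_le_mul_of_nonneg_left key (Real.exp_pos (-C * r)).le
      calc Real.exp (-C * r) * a ≤ Real.exp (-C * r) * (Real.exp (C * r) * (1 - Real.log (h r))) := this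
        _ = (Real.exp (-C * r) * Real.exp (C * r)) * (1 - Real.log (h r)) := by ring
        _ = 1 - Real.log (h r) := by rw [hEr]; ring
    have : Real.log (h r) ≤ 1 - Real.exp (-C * r) * a := by linarith
    calc h r = Real.exp (Real.log (h r)) := (Real.exp_log (hpos r).1).symm
      _ ≤ Real.exp (1 - Real.exp (-C * r) * a) := Real.exp_le_exp.mpr this
      _ = g r := (hgeq r).symm
end
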